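/- For real numbers h > 0, N > 0, ρ ≥ 0, and any scalar α > 1, it holds that (1 + h/(α·ρ + N))^α > 1 + h/(ρ + N). -/
import Mathlib

theorem stmt_0 (h N ρ α : ℝ) (hh : 0 < h) (hN : 0 < N) (hρ : 0 ≤ ρ) (hα : 1 < α) :
    (1 + h / (α * ρ + N)) ^ α > 1 + h / (ρ + N) := by
  have hα0 : 0 < α := lt_trans one_pos hα
  have hden : 0 < α * ρ + N := by positivity
  have hden2 : 0 < ρ + N := by positivity
  set s := h / (α * ρ + N) with hs
  have hs0 : 0 < s := div_pos hh hden
  have key : 1 + α * s < (1 + s) ^ α :=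
    one_add_mul_self_lt_rpow_one_add (by linarith) (ne_of_gt hs0) hα
  have h2 : h / (ρ + N) ≤ α * s := by
    rw [hs, mul_div_assoc']
    rw [div_le_div_iff₀ hden2 hden]
    nlinarith [mul_pos hh hN]
  linarith
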